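/- For the modular maximal-cyclic group M_4(2) of order 16 (the semidirect product C_8 ⋊ C_2 with the action x ↦ x^5), the dual Euler totient φ̂(G) = ∑_{H ≤ G} μ(1,H)·|G:H| equals 0, yet G admits a faithful irreducible complex representation. -/

import Mathlib

structure MM where
  i : ZMod 8
  j : ZMod 2
deriving DecidableEq, Fintype

namespace MM
def cc (j : ZMod 2) : ZMod 8 := if j = 0 then 1 else 5

instance : One MM := ⟨⟨0,0⟩⟩
instance : Mul MM := ⟨fun x y => ⟨x.i + cc x.j * y.i, x.j + y.j⟩⟩
instance : Inv MM := ⟨fun x => ⟨-(cc x.j * x.i), x.j⟩⟩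

lemma mul_def (x y : MM) : x * y = ⟨x.i + cc x.j * y.i, x.j + y.j⟩ := rfl
lemma one_def : (1 : MM) = ⟨0,0⟩ := rfl
lemma cc_add : ∀ u v : ZMod 2, cc (u+v) = cc u * cc v := by decide
lemma two_eq_zero : ∀ u : ZMod 2, u + u = 0 := by decide
lemma cc_mul_cc : ∀ u : ZMod 2, cc u * cc u = 1 := by decide

instance group : Group MM :=
  Group.ofLeftAxioms
    (fun x y z => by simp only [mul_def, cc_add, mk.injEq]; exact ⟨by ring, by ring⟩)
    (fun x => by simp [mul_def, one_def, cc])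
    (fun x => by
      show (⟨-(cc x.j * x.i), x.j⟩ * x : MM) = 1
      simp [mul_def, one_def, two_eq_zero x.j, cc_mul_cc])

lemma zmod2_cases : ∀ j : ZMod 2, j = 0 ∨ j = 1 := by decide
lemma mulA : ∀ d i : ZMod 8, (⟨d,0⟩:MM) * ⟨i,1⟩ = ⟨d+i,1⟩ := by decide
lemma mulB : ∀ k i : ZMod 8, (⟨k,1⟩:MM) * ⟨i,1⟩ = ⟨k+5*i,0⟩ := by decide

def α : MM := ⟨1,0⟩
def β : MM := ⟨0,1⟩

section lift
variable {H : Type*} [Monoid H] (x y : H)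

lemma pow_mod8 (hx : x^8 = 1) (m : ℕ) : x^m = x^(m % 8) := by
  conv_lhs => rw [← Nat.mod_add_div m 8, pow_add, pow_mul, hx, one_pow, mul_one]

lemma pow_mod2 (hy : y^2 = 1) (m : ℕ) : y^m = y^(m % 2) := by
  conv_lhs => rw [← Nat.mod_add_div m 2, pow_add, pow_mul, hy, one_pow, mul_one]

lemma y_pow_x (hc : y * x = x^5 * y) (m : ℕ) : y * x^m = x^(5*m) * y := by
  induction m with
  | zero => simp
  | succ n ih =>
    rw [pow_succ, ← mul_assoc, ih, mul_assoc, hc, Nat.mul_succ, pow_add, mul_assoc]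

lemma ypow_xpow (hc : y * x = x^5 * y) (n m : ℕ) : y^n * x^m = x^(5^n*m) * y^n := by
  induction n generalizing m with
  | zero => simp
  | succ n ih =>
    rw [pow_succ, mul_assoc, y_pow_x x y hc, ← mul_assoc, ih (5*m), mul_assoc, ← pow_succ]
    have h5 : 5^n*(5*m) = 5^(n+1)*m := by ring
    rw [h5]

lemma val_arith : ∀ (i k : ZMod 8) (j : ZMod 2),
    (i + cc j * k).val % 8 = (i.val + 5^j.val * k.val) % 8 := by decide

/-- The lift of the presentation to any monoid. -/
def lift (hx : x^8 = 1) (hy : y^2 = 1) (hc : y * x = x^5 * y) : MM →* H where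
  toFun g := x ^ g.i.val * y ^ g.j.val
  map_one' := by simp [one_def]
  map_mul' g h := by
    rcases g with ⟨i, j⟩; rcases h with ⟨k, l⟩
    show x ^ (i + cc j * k).val * y ^ (j + l).val
        = (x ^ i.val * y ^ j.val) * (x ^ k.val * y ^ l.val)
    rw [mul_assoc, ← mul_assoc (y ^ j.val), ypow_xpow x y hc, mul_assoc, ← pow_add,
      ← mul_assoc, ← pow_add, pow_mod8 x hx, val_arith,  ← pow_mod8 x hx,
      pow_mod2 y hy (j+l).val, show ∀ j l : ZMod 2, (j+l).val % 2 = (j.val + l.val) % 2 by decide,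
      ← pow_mod2 y hy]

lemma lift_alpha (hx : x^8 = 1) (hy : y^2 = 1) (hc : y * x = x^5 * y) :
    lift x y hx hy hc α = x := by
  show x ^ (1 : ZMod 8).val * y ^ (0 : ZMod 2).val = x
  rw [show (1 : ZMod 8).val = 1 from rfl, show (0 : ZMod 2).val = 0 from rfl, pow_one, pow_zero,
    mul_one]

lemma lift_beta (hx : x^8 = 1) (hy : y^2 = 1) (hc : y * x = x^5 * y) :
    lift x y hx hy hc β = y := by
  show x ^ (0 : ZMod 8).val * y ^ (1 : ZMod 2).val = y
  rw [show (0 : ZMod 8).val = 0 from rfl, show (1 : ZMod 2).val = 1 from rfl, pow_one, pow_zero,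
    one_mul]

end lift

def c : Fin 11 → Finset MM
| 0 => {⟨0,0⟩}
| 1 => {⟨0,0⟩,⟨4,0⟩}
| 2 => {⟨0,0⟩,⟨0,1⟩}
| 3 => {⟨0,0⟩,⟨4,1⟩}
| 4 => {⟨0,0⟩,⟨2,0⟩,⟨4,0⟩,⟨6,0⟩}
| 5 => {⟨0,0⟩,⟨4,0⟩,⟨0,1⟩,⟨4,1⟩}
| 6 => {⟨0,0⟩,⟨4,0⟩,⟨2,1⟩,⟨6,1⟩}
| 7 => {⟨0,0⟩,⟨1,0⟩,⟨2,0⟩,⟨3,0⟩,⟨4,0⟩,⟨5,0⟩,⟨6,0⟩,⟨7,0⟩}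
| 8 => {⟨0,0⟩,⟨2,0⟩,⟨4,0⟩,⟨6,0⟩,⟨0,1⟩,⟨2,1⟩,⟨4,1⟩,⟨6,1⟩}
| 9 => {⟨0,0⟩,⟨2,0⟩,⟨4,0⟩,⟨6,0⟩,⟨1,1⟩,⟨3,1⟩,⟨5,1⟩,⟨7,1⟩}
| 10 => Finset.univ

lemma c_one : ∀ t, (1:MM) ∈ c t := by decide
lemma c_mul : ∀ t, ∀ x ∈ c t, ∀ y ∈ c t, x * y ∈ c t := by decide
lemma c_inv : ∀ t, ∀ x ∈ c t, x⁻¹ ∈ c t := by decide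

def B (t : Fin 11) : Subgroup MM where
  carrier := ↑(c t)
  one_mem' := c_one t
  mul_mem' := fun hx hy => c_mul t _ hx _ hy
  inv_mem' := fun hx => c_inv t _ hx

lemma mem_B {x : MM} {t : Fin 11} : x ∈ B t ↔ x ∈ c t := Iff.rfl

lemma B_le_iff {s t : Fin 11} : B s ≤ B t ↔ c s ⊆ c t := by
  constructor
  · intro h x hx; exact (mem_B).1 (h ((mem_B).2 hx))
  · intro h x hx; exact (mem_B).2 (h ((mem_B).1 hx))

lemma B_lt_iff {s t : Fin 11} : B s < B t ↔ (c s ⊆ c t ∧ ¬ c t ⊆ c s) := by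
  rw [lt_iff_le_not_ge, B_le_iff, B_le_iff]

lemma B_inj : Function.Injective B := by
  intro s t h
  have h2 : c s = c t := Finset.coe_injective (congrArg (fun (K : Subgroup MM) => (K : Set MM)) h)
  exact (by decide : ∀ s t : Fin 11, c s = c t → s = t) s t h2

lemma eq_of_parts (H : Subgroup MM) (t : Fin 11) (sA sB : Finset (ZMod 8))
    (hct : ∀ x : MM, x ∈ c t ↔ (x.j = 0 ∧ x.i ∈ sA) ∨ (x.j = 1 ∧ x.i ∈ sB))
    (hA0 : ∀ k, (⟨k,0⟩:MM) ∈ H → k ∈ sA) (hA1 : ∀ k, (⟨k,1⟩:MM) ∈ H → k ∈ sB)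
    (hup0 : ∀ k ∈ sA, (⟨k,0⟩:MM) ∈ H) (hup1 : ∀ k ∈ sB, (⟨k,1⟩:MM) ∈ H) :
    H = B t := by
  ext x
  rw [mem_B, hct]
  rcases x with ⟨xi, xj⟩
  constructor
  · intro hx
    rcases zmod2_cases xj with rfl|rfl
    · exact Or.inl ⟨rfl, hA0 _ hx⟩
    · exact Or.inr ⟨rfl, hA1 _ hx⟩
  · rintro (⟨hj, hi⟩|⟨hj, hi⟩)
    · have : xj = 0 := hj; subst this; exact hup0 _ hi
    · have : xj = 1 := hj; subst this; exact hup1 _ hi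

theorem classify (H : Subgroup MM) : ∃ t, H = B t := by
  by_cases hodd : ∃ k : ZMod 8, k.val % 2 = 1 ∧ (⟨k,0⟩:MM) ∈ H
  · obtain ⟨k, hk1, hk2⟩ := hodd
    have h1 : (⟨1,0⟩:MM) ∈ H := by
      have e := (by decide : ∀ k : ZMod 8, k.val % 2 = 1 → (⟨k,0⟩:MM)^(k.val) = ⟨1,0⟩) k hk1
      exact e ▸ pow_mem hk2 k.val
    have hup0 : ∀ m : ZMod 8, (⟨m,0⟩:MM) ∈ H := by
      intro m
      have e : (⟨1,0⟩:MM)^(m.val) = ⟨m,0⟩ := by revert m; decide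
      exact e ▸ pow_mem h1 m.val
    by_cases hβ : ∃ i : ZMod 8, (⟨i,1⟩:MM) ∈ H
    · obtain ⟨i, hi⟩ := hβ
      refine ⟨10, eq_of_parts H 10 Finset.univ Finset.univ (by decide)
        (fun k _ => Finset.mem_univ k) (fun k _ => Finset.mem_univ k)
        (fun k _ => hup0 k) (fun k _ => ?_)⟩
      have h := mul_mem (hup0 (k - i)) hi
      rw [mulA] at h; rwa [sub_add_cancel] at h
    · push_neg at hβ
      exact ⟨7, eq_of_parts H 7 Finset.univ ∅ (by decide)
        (fun k _ => Finset.mem_univ k) (fun k hk => absurd hk (hβ k))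
        (fun k _ => hup0 k) (fun k hk => absurd hk (by simp))⟩
  · push_neg at hodd
    by_cases h2 : ∃ k : ZMod 8, k.val % 4 = 2 ∧ (⟨k,0⟩:MM) ∈ H
    · obtain ⟨k, hk1, hk2⟩ := h2
      have h2' : (⟨2,0⟩:MM) ∈ H := by
        have e := (by decide : ∀ k : ZMod 8, k.val % 4 = 2 →
          (⟨k,0⟩:MM)^(if k = 2 then 1 else 3) = ⟨2,0⟩) k hk1
        exact e ▸ pow_mem hk2 _
      have hup0 : ∀ m ∈ ({0,2,4,6} : Finset (ZMod 8)), (⟨m,0⟩:MM) ∈ H := by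
        intro m hm
        have e : (⟨2,0⟩:MM)^(m.val/2) = ⟨m,0⟩ := by revert hm; revert m; decide
        exact e ▸ pow_mem h2' _
      have hA0 : ∀ k', (⟨k',0⟩:MM) ∈ H → k' ∈ ({0,2,4,6}:Finset (ZMod 8)) := by
        intro k' hk'
        rcases (by decide : ∀ k' : ZMod 8, k'.val % 2 = 1 ∨ k' ∈ ({0,2,4,6}:Finset (ZMod 8))) k'
          with h|h
        · exact absurd hk' (hodd k' h)
        · exact h
      by_cases hβ : ∃ i : ZMod 8, (⟨i,1⟩:MM) ∈ H
      · obtain ⟨i, hi⟩ := hβ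
        rcases (by decide : ∀ i : ZMod 8, i ∈ ({0,2,4,6}:Finset (ZMod 8)) ∨
            i ∈ ({1,3,5,7}:Finset (ZMod 8))) i with h|h
        · refine ⟨8, eq_of_parts H 8 {0,2,4,6} {0,2,4,6} (by decide) hA0 (fun k hk => ?_)
            hup0 (fun k hk => ?_)⟩
          · have hm := mul_mem hk hi
            rw [mulB] at hm
            exact (by decide : ∀ i ∈ ({0,2,4,6}:Finset (ZMod 8)), ∀ k : ZMod 8,
              k + 5*i ∈ ({0,2,4,6}:Finset (ZMod 8)) → k ∈ ({0,2,4,6}:Finset (ZMod 8)))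
              i h k (hA0 _ hm)
          · have hm := mul_mem (hup0 (k - i) ((by decide : ∀ i ∈ ({0,2,4,6}:Finset (ZMod 8)),
              ∀ k ∈ ({0,2,4,6}:Finset (ZMod 8)), k - i ∈ ({0,2,4,6}:Finset (ZMod 8))) i h k hk)) hi
            rw [mulA] at hm; rwa [sub_add_cancel] at hm
        · refine ⟨9, eq_of_parts H 9 {0,2,4,6} {1,3,5,7} (by decide) hA0 (fun k hk => ?_)
            hup0 (fun k hk => ?_)⟩
          · have hm := mul_mem hk hi
            rw [mulB] at hm
            exact (by decide : ∀ i ∈ ({1,3,5,7}:Finset (ZMod 8)), ∀ k : ZMod 8,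
              k + 5*i ∈ ({0,2,4,6}:Finset (ZMod 8)) → k ∈ ({1,3,5,7}:Finset (ZMod 8)))
              i h k (hA0 _ hm)
          · have hm := mul_mem (hup0 (k - i) ((by decide : ∀ i ∈ ({1,3,5,7}:Finset (ZMod 8)),
              ∀ k ∈ ({1,3,5,7}:Finset (ZMod 8)), k - i ∈ ({0,2,4,6}:Finset (ZMod 8))) i h k hk)) hi
            rw [mulA] at hm; rwa [sub_add_cancel] at hm
      · push_neg at hβ
        exact ⟨4, eq_of_parts H 4 {0,2,4,6} ∅ (by decide) hA0 (fun k hk => absurd hk (hβ k))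
          hup0 (fun k hk => absurd hk (by simp))⟩
    · push_neg at h2
      by_cases h4 : (⟨4,0⟩:MM) ∈ H
      · have hup0 : ∀ m ∈ ({0,4} : Finset (ZMod 8)), (⟨m,0⟩:MM) ∈ H := by
          intro m hm
          have e : (⟨4,0⟩:MM)^(m.val/4) = ⟨m,0⟩ := by revert hm; revert m; decide
          exact e ▸ pow_mem h4 _
        have hA0 : ∀ k, (⟨k,0⟩:MM) ∈ H → k ∈ ({0,4}:Finset (ZMod 8)) := by
          intro k hk
          rcases (by decide : ∀ k : ZMod 8, k.val % 2 = 1 ∨ k.val % 4 = 2 ∨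
              k ∈ ({0,4}:Finset (ZMod 8))) k with h|h|h
          · exact absurd hk (hodd k h)
          · exact absurd hk (h2 k h)
          · exact h
        by_cases hβ : ∃ i : ZMod 8, (⟨i,1⟩:MM) ∈ H
        · obtain ⟨i, hi⟩ := hβ
          have hsq := mul_mem hi hi
          rw [mulB] at hsq
          have hi2 := hA0 _ hsq
          rcases (by decide : ∀ i : ZMod 8, i + 5*i ∈ ({0,4}:Finset (ZMod 8)) →
              i ∈ ({0,4}:Finset (ZMod 8)) ∨ i ∈ ({2,6}:Finset (ZMod 8))) i hi2 with h|h
          · refine ⟨5, eq_of_parts H 5 {0,4} {0,4} (by decide) hA0 (fun k hk => ?_)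
              hup0 (fun k hk => ?_)⟩
            · have hm := mul_mem hk hi
              rw [mulB] at hm
              exact (by decide : ∀ i ∈ ({0,4}:Finset (ZMod 8)), ∀ k : ZMod 8,
                k + 5*i ∈ ({0,4}:Finset (ZMod 8)) → k ∈ ({0,4}:Finset (ZMod 8))) i h k (hA0 _ hm)
            · have hm := mul_mem (hup0 (k - i) ((by decide : ∀ i ∈ ({0,4}:Finset (ZMod 8)),
                ∀ k ∈ ({0,4}:Finset (ZMod 8)), k - i ∈ ({0,4}:Finset (ZMod 8))) i h k hk)) hi
              rw [mulA] at hm; rwa [sub_add_cancel] at hm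
          · refine ⟨6, eq_of_parts H 6 {0,4} {2,6} (by decide) hA0 (fun k hk => ?_)
              hup0 (fun k hk => ?_)⟩
            · have hm := mul_mem hk hi
              rw [mulB] at hm
              exact (by decide : ∀ i ∈ ({2,6}:Finset (ZMod 8)), ∀ k : ZMod 8,
                k + 5*i ∈ ({0,4}:Finset (ZMod 8)) → k ∈ ({2,6}:Finset (ZMod 8))) i h k (hA0 _ hm)
            · have hm := mul_mem (hup0 (k - i) ((by decide : ∀ i ∈ ({2,6}:Finset (ZMod 8)),
                ∀ k ∈ ({2,6}:Finset (ZMod 8)), k - i ∈ ({0,4}:Finset (ZMod 8))) i h k hk)) hi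
              rw [mulA] at hm; rwa [sub_add_cancel] at hm
        · push_neg at hβ
          exact ⟨1, eq_of_parts H 1 {0,4} ∅ (by decide) hA0 (fun k hk => absurd hk (hβ k))
            hup0 (fun k hk => absurd hk (by simp))⟩
      · have hA0 : ∀ k, (⟨k,0⟩:MM) ∈ H → k ∈ ({0}:Finset (ZMod 8)) := by
          intro k hk
          rcases (by decide : ∀ k : ZMod 8, k.val % 2 = 1 ∨ k.val % 4 = 2 ∨ k = 4 ∨
              k ∈ ({0}:Finset (ZMod 8))) k with h|h|h|h
          · exact absurd hk (hodd k h)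
          · exact absurd hk (h2 k h)
          · subst h; exact absurd hk h4
          · exact h
        have hup0 : ∀ m ∈ ({0} : Finset (ZMod 8)), (⟨m,0⟩:MM) ∈ H := by
          intro m hm
          have : m = 0 := by simpa using hm
          subst this; exact one_mem H
        by_cases hβ0 : (⟨0,1⟩:MM) ∈ H
        · refine ⟨2, eq_of_parts H 2 {0} {0} (by decide) hA0 (fun k hk => ?_) hup0
            (fun k hk => by simp at hk; subst hk; exact hβ0)⟩
          have hm := mul_mem hk hβ0
          rw [mulB] at hm
          have := hA0 _ hm
          simpa using this
        · by_cases hβ4 : (⟨4,1⟩:MM) ∈ H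
          · refine ⟨3, eq_of_parts H 3 {0} {4} (by decide) hA0 (fun k hk => ?_) hup0
              (fun k hk => by simp at hk; subst hk; exact hβ4)⟩
            have hm := mul_mem hk hβ4
            rw [mulB] at hm
            have := hA0 _ hm
            exact (by decide : ∀ k : ZMod 8, k + 5*4 ∈ ({0}:Finset (ZMod 8)) →
              k ∈ ({4}:Finset (ZMod 8))) k this
          · refine ⟨0, eq_of_parts H 0 {0} ∅ (by decide) hA0 (fun k hk => ?_) hup0
              (fun k hk => absurd hk (by simp))⟩
            have hsq := mul_mem hk hk
            rw [mulB] at hsq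
            have := hA0 _ hsq
            rcases (by decide : ∀ k : ZMod 8, k + 5*k ∈ ({0}:Finset (ZMod 8)) →
              k = 0 ∨ k = 4) k this with h|h
            · subst h; exact absurd hk hβ0
            · subst h; exact absurd hk hβ4

end MM

namespace MM
lemma B0_eq_bot : B 0 = ⊥ := by
  ext x
  rw [mem_B, Subgroup.mem_bot]
  constructor
  · intro h; have : x = ⟨0,0⟩ := by simpa [c] using h
    rw [this]; rfl
  · rintro rfl; exact c_one 0

lemma cardMM : Nat.card MM = 16 := by
  rw [Nat.card_eq_fintype_card]; decide

lemma B_card_mul_index (t : Fin 11) : (c t).card * (B t).index = 16 := by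
  have h1 : Nat.card (B t) = (c t).card := by
    have : Nat.card ((c t : Set MM) : Type) = (c t).card := by
      rw [Nat.card_coe_set_eq, Set.ncard_coe_finset]
    exact this
  have h2 := Subgroup.card_mul_index (B t)
  rw [h1, cardMM] at h2
  exact h2

/-- the computable filter -/
def FF (s t : Fin 11) : Finset (Fin 11) :=
  Finset.univ.filter (fun u => (c s ⊆ c u ∧ ¬ c u ⊆ c s) ∧ c u ⊆ c t)

example : FF 0 1 = {1} := rfl
example : FF 0 10 = {1,2,3,4,5,6,7,8,9,10} := rfl
example : FF 0 1 = {1} := by ext u; revert u; decide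


lemma FF_pred_iff {s t u : Fin 11} :
    ((c s ⊆ c u ∧ ¬ c u ⊆ c s) ∧ c u ≤ c t) ↔ u ∈ FF s t := by
  simp [FF]

open scoped Classical in
theorem mobius_sum (ν : Subgroup MM → Subgroup MM → ℤ)
    (hself : ∀ K : Subgroup MM, ν K K = 1)
    (hlt : ∀ K K' : Subgroup MM, K < K' →
      ν K K' = -∑ L ∈ Finset.univ.filter (fun L : Subgroup MM => K < L ∧ L ≤ K'), ν L K') :
    (∑ H : Subgroup MM, ν ⊥ H * (H.index : ℤ)) = 0 := by
  have himg : (Finset.univ : Finset (Subgroup MM)) = Finset.univ.image B := by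
    ext H
    simp only [Finset.mem_univ, true_iff, Finset.mem_image]
    obtain ⟨t, ht⟩ := classify H
    exact ⟨t, trivial, ht.symm⟩
  have hlt' : ∀ s t : Fin 11, B s < B t → ν (B s) (B t) = -∑ u ∈ FF s t, ν (B u) (B t) := by
    intro s t hst
    rw [hlt _ _ hst]
    congr 1
    rw [himg, Finset.filter_image,
      Finset.sum_image (fun x _ y _ h => B_inj h)]
    have hfe : Finset.univ.filter (fun a : Fin 11 => B s < B a ∧ B a ≤ B t) = FF s t := by
      apply Finset.filter_congr
      intro u _
      rw [B_lt_iff, B_le_iff]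
    rw [hfe]
  have v0_1 : ν (B 0) (B 1) = -1 := by
    rw [hlt' 0 1 (B_lt_iff.mpr (by decide)),
      show FF 0 1 = ({1} : Finset (Fin 11)) from rfl]
    rw [Finset.sum_singleton]
    rw [hself (B 1)]
    try norm_num
  have v0_2 : ν (B 0) (B 2) = -1 := by
    rw [hlt' 0 2 (B_lt_iff.mpr (by decide)),
      show FF 0 2 = ({2} : Finset (Fin 11)) from rfl]
    rw [Finset.sum_singleton]
    rw [hself (B 2)]
    try norm_num
  have v0_3 : ν (B 0) (B 3) = -1 := by
    rw [hlt' 0 3 (B_lt_iff.mpr (by decide)),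
      show FF 0 3 = ({3} : Finset (Fin 11)) from rfl]
    rw [Finset.sum_singleton]
    rw [hself (B 3)]
    try norm_num
  have v1_4 : ν (B 1) (B 4) = -1 := by
    rw [hlt' 1 4 (B_lt_iff.mpr (by decide)),
      show FF 1 4 = ({4} : Finset (Fin 11)) from rfl]
    rw [Finset.sum_singleton]
    rw [hself (B 4)]
    try norm_num
  have v0_4 : ν (B 0) (B 4) = 0 := by
    rw [hlt' 0 4 (B_lt_iff.mpr (by decide)),
      show FF 0 4 = ({1,4} : Finset (Fin 11)) from rfl]
    rw [Finset.sum_insert (show (1:Fin 11) ∉ ({4} : Finset (Fin 11)) by decide)]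
    rw [Finset.sum_singleton]
    rw [v1_4, hself (B 4)]
    try norm_num
  have v1_5 : ν (B 1) (B 5) = -1 := by
    rw [hlt' 1 5 (B_lt_iff.mpr (by decide)),
      show FF 1 5 = ({5} : Finset (Fin 11)) from rfl]
    rw [Finset.sum_singleton]
    rw [hself (B 5)]
    try norm_num
  have v2_5 : ν (B 2) (B 5) = -1 := by
    rw [hlt' 2 5 (B_lt_iff.mpr (by decide)),
      show FF 2 5 = ({5} : Finset (Fin 11)) from rfl]
    rw [Finset.sum_singleton]
    rw [hself (B 5)]
    try norm_num
  have v3_5 : ν (B 3) (B 5) = -1 := by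
    rw [hlt' 3 5 (B_lt_iff.mpr (by decide)),
      show FF 3 5 = ({5} : Finset (Fin 11)) from rfl]
    rw [Finset.sum_singleton]
    rw [hself (B 5)]
    try norm_num
  have v0_5 : ν (B 0) (B 5) = 2 := by
    rw [hlt' 0 5 (B_lt_iff.mpr (by decide)),
      show FF 0 5 = ({1,2,3,5} : Finset (Fin 11)) from rfl]
    rw [Finset.sum_insert (show (1:Fin 11) ∉ ({2,3,5} : Finset (Fin 11)) by decide)]
    rw [Finset.sum_insert (show (2:Fin 11) ∉ ({3,5} : Finset (Fin 11)) by decide)]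
    rw [Finset.sum_insert (show (3:Fin 11) ∉ ({5} : Finset (Fin 11)) by decide)]
    rw [Finset.sum_singleton]
    rw [v1_5, v2_5, v3_5, hself (B 5)]
    try norm_num
  have v1_6 : ν (B 1) (B 6) = -1 := by
    rw [hlt' 1 6 (B_lt_iff.mpr (by decide)),
      show FF 1 6 = ({6} : Finset (Fin 11)) from rfl]
    rw [Finset.sum_singleton]
    rw [hself (B 6)]
    try norm_num
  have v0_6 : ν (B 0) (B 6) = 0 := by
    rw [hlt' 0 6 (B_lt_iff.mpr (by decide)),
      show FF 0 6 = ({1,6} : Finset (Fin 11)) from rfl]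
    rw [Finset.sum_insert (show (1:Fin 11) ∉ ({6} : Finset (Fin 11)) by decide)]
    rw [Finset.sum_singleton]
    rw [v1_6, hself (B 6)]
    try norm_num
  have v4_7 : ν (B 4) (B 7) = -1 := by
    rw [hlt' 4 7 (B_lt_iff.mpr (by decide)),
      show FF 4 7 = ({7} : Finset (Fin 11)) from rfl]
    rw [Finset.sum_singleton]
    rw [hself (B 7)]
    try norm_num
  have v1_7 : ν (B 1) (B 7) = 0 := by
    rw [hlt' 1 7 (B_lt_iff.mpr (by decide)),
      show FF 1 7 = ({4,7} : Finset (Fin 11)) from rfl]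
    rw [Finset.sum_insert (show (4:Fin 11) ∉ ({7} : Finset (Fin 11)) by decide)]
    rw [Finset.sum_singleton]
    rw [v4_7, hself (B 7)]
    try norm_num
  have v0_7 : ν (B 0) (B 7) = 0 := by
    rw [hlt' 0 7 (B_lt_iff.mpr (by decide)),
      show FF 0 7 = ({1,4,7} : Finset (Fin 11)) from rfl]
    rw [Finset.sum_insert (show (1:Fin 11) ∉ ({4,7} : Finset (Fin 11)) by decide)]
    rw [Finset.sum_insert (show (4:Fin 11) ∉ ({7} : Finset (Fin 11)) by decide)]
    rw [Finset.sum_singleton]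
    rw [v1_7, v4_7, hself (B 7)]
    try norm_num
  have v4_8 : ν (B 4) (B 8) = -1 := by
    rw [hlt' 4 8 (B_lt_iff.mpr (by decide)),
      show FF 4 8 = ({8} : Finset (Fin 11)) from rfl]
    rw [Finset.sum_singleton]
    rw [hself (B 8)]
    try norm_num
  have v5_8 : ν (B 5) (B 8) = -1 := by
    rw [hlt' 5 8 (B_lt_iff.mpr (by decide)),
      show FF 5 8 = ({8} : Finset (Fin 11)) from rfl]
    rw [Finset.sum_singleton]
    rw [hself (B 8)]
    try norm_num
  have v6_8 : ν (B 6) (B 8) = -1 := by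
    rw [hlt' 6 8 (B_lt_iff.mpr (by decide)),
      show FF 6 8 = ({8} : Finset (Fin 11)) from rfl]
    rw [Finset.sum_singleton]
    rw [hself (B 8)]
    try norm_num
  have v1_8 : ν (B 1) (B 8) = 2 := by
    rw [hlt' 1 8 (B_lt_iff.mpr (by decide)),
      show FF 1 8 = ({4,5,6,8} : Finset (Fin 11)) from rfl]
    rw [Finset.sum_insert (show (4:Fin 11) ∉ ({5,6,8} : Finset (Fin 11)) by decide)]
    rw [Finset.sum_insert (show (5:Fin 11) ∉ ({6,8} : Finset (Fin 11)) by decide)]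
    rw [Finset.sum_insert (show (6:Fin 11) ∉ ({8} : Finset (Fin 11)) by decide)]
    rw [Finset.sum_singleton]
    rw [v4_8, v5_8, v6_8, hself (B 8)]
    try norm_num
  have v2_8 : ν (B 2) (B 8) = 0 := by
    rw [hlt' 2 8 (B_lt_iff.mpr (by decide)),
      show FF 2 8 = ({5,8} : Finset (Fin 11)) from rfl]
    rw [Finset.sum_insert (show (5:Fin 11) ∉ ({8} : Finset (Fin 11)) by decide)]
    rw [Finset.sum_singleton]
    rw [v5_8, hself (B 8)]
    try norm_num
  have v3_8 : ν (B 3) (B 8) = 0 := by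
    rw [hlt' 3 8 (B_lt_iff.mpr (by decide)),
      show FF 3 8 = ({5,8} : Finset (Fin 11)) from rfl]
    rw [Finset.sum_insert (show (5:Fin 11) ∉ ({8} : Finset (Fin 11)) by decide)]
    rw [Finset.sum_singleton]
    rw [v5_8, hself (B 8)]
    try norm_num
  have v0_8 : ν (B 0) (B 8) = 0 := by
    rw [hlt' 0 8 (B_lt_iff.mpr (by decide)),
      show FF 0 8 = ({1,2,3,4,5,6,8} : Finset (Fin 11)) from rfl]
    rw [Finset.sum_insert (show (1:Fin 11) ∉ ({2,3,4,5,6,8} : Finset (Fin 11)) by decide)]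
    rw [Finset.sum_insert (show (2:Fin 11) ∉ ({3,4,5,6,8} : Finset (Fin 11)) by decide)]
    rw [Finset.sum_insert (show (3:Fin 11) ∉ ({4,5,6,8} : Finset (Fin 11)) by decide)]
    rw [Finset.sum_insert (show (4:Fin 11) ∉ ({5,6,8} : Finset (Fin 11)) by decide)]
    rw [Finset.sum_insert (show (5:Fin 11) ∉ ({6,8} : Finset (Fin 11)) by decide)]
    rw [Finset.sum_insert (show (6:Fin 11) ∉ ({8} : Finset (Fin 11)) by decide)]
    rw [Finset.sum_singleton]
    rw [v1_8, v2_8, v3_8, v4_8, v5_8, v6_8, hself (B 8)]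
    try norm_num
  have v4_9 : ν (B 4) (B 9) = -1 := by
    rw [hlt' 4 9 (B_lt_iff.mpr (by decide)),
      show FF 4 9 = ({9} : Finset (Fin 11)) from rfl]
    rw [Finset.sum_singleton]
    rw [hself (B 9)]
    try norm_num
  have v1_9 : ν (B 1) (B 9) = 0 := by
    rw [hlt' 1 9 (B_lt_iff.mpr (by decide)),
      show FF 1 9 = ({4,9} : Finset (Fin 11)) from rfl]
    rw [Finset.sum_insert (show (4:Fin 11) ∉ ({9} : Finset (Fin 11)) by decide)]
    rw [Finset.sum_singleton]
    rw [v4_9, hself (B 9)]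
    try norm_num
  have v0_9 : ν (B 0) (B 9) = 0 := by
    rw [hlt' 0 9 (B_lt_iff.mpr (by decide)),
      show FF 0 9 = ({1,4,9} : Finset (Fin 11)) from rfl]
    rw [Finset.sum_insert (show (1:Fin 11) ∉ ({4,9} : Finset (Fin 11)) by decide)]
    rw [Finset.sum_insert (show (4:Fin 11) ∉ ({9} : Finset (Fin 11)) by decide)]
    rw [Finset.sum_singleton]
    rw [v1_9, v4_9, hself (B 9)]
    try norm_num
  have v7_10 : ν (B 7) (B 10) = -1 := by
    rw [hlt' 7 10 (B_lt_iff.mpr (by decide)),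
      show FF 7 10 = ({10} : Finset (Fin 11)) from rfl]
    rw [Finset.sum_singleton]
    rw [hself (B 10)]
    try norm_num
  have v8_10 : ν (B 8) (B 10) = -1 := by
    rw [hlt' 8 10 (B_lt_iff.mpr (by decide)),
      show FF 8 10 = ({10} : Finset (Fin 11)) from rfl]
    rw [Finset.sum_singleton]
    rw [hself (B 10)]
    try norm_num
  have v9_10 : ν (B 9) (B 10) = -1 := by
    rw [hlt' 9 10 (B_lt_iff.mpr (by decide)),
      show FF 9 10 = ({10} : Finset (Fin 11)) from rfl]
    rw [Finset.sum_singleton]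
    rw [hself (B 10)]
    try norm_num
  have v4_10 : ν (B 4) (B 10) = 2 := by
    rw [hlt' 4 10 (B_lt_iff.mpr (by decide)),
      show FF 4 10 = ({7,8,9,10} : Finset (Fin 11)) from rfl]
    rw [Finset.sum_insert (show (7:Fin 11) ∉ ({8,9,10} : Finset (Fin 11)) by decide)]
    rw [Finset.sum_insert (show (8:Fin 11) ∉ ({9,10} : Finset (Fin 11)) by decide)]
    rw [Finset.sum_insert (show (9:Fin 11) ∉ ({10} : Finset (Fin 11)) by decide)]
    rw [Finset.sum_singleton]
    rw [v7_10, v8_10, v9_10, hself (B 10)]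
    try norm_num
  have v5_10 : ν (B 5) (B 10) = 0 := by
    rw [hlt' 5 10 (B_lt_iff.mpr (by decide)),
      show FF 5 10 = ({8,10} : Finset (Fin 11)) from rfl]
    rw [Finset.sum_insert (show (8:Fin 11) ∉ ({10} : Finset (Fin 11)) by decide)]
    rw [Finset.sum_singleton]
    rw [v8_10, hself (B 10)]
    try norm_num
  have v6_10 : ν (B 6) (B 10) = 0 := by
    rw [hlt' 6 10 (B_lt_iff.mpr (by decide)),
      show FF 6 10 = ({8,10} : Finset (Fin 11)) from rfl]
    rw [Finset.sum_insert (show (8:Fin 11) ∉ ({10} : Finset (Fin 11)) by decide)]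
    rw [Finset.sum_singleton]
    rw [v8_10, hself (B 10)]
    try norm_num
  have v1_10 : ν (B 1) (B 10) = 0 := by
    rw [hlt' 1 10 (B_lt_iff.mpr (by decide)),
      show FF 1 10 = ({4,5,6,7,8,9,10} : Finset (Fin 11)) from rfl]
    rw [Finset.sum_insert (show (4:Fin 11) ∉ ({5,6,7,8,9,10} : Finset (Fin 11)) by decide)]
    rw [Finset.sum_insert (show (5:Fin 11) ∉ ({6,7,8,9,10} : Finset (Fin 11)) by decide)]
    rw [Finset.sum_insert (show (6:Fin 11) ∉ ({7,8,9,10} : Finset (Fin 11)) by decide)]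
    rw [Finset.sum_insert (show (7:Fin 11) ∉ ({8,9,10} : Finset (Fin 11)) by decide)]
    rw [Finset.sum_insert (show (8:Fin 11) ∉ ({9,10} : Finset (Fin 11)) by decide)]
    rw [Finset.sum_insert (show (9:Fin 11) ∉ ({10} : Finset (Fin 11)) by decide)]
    rw [Finset.sum_singleton]
    rw [v4_10, v5_10, v6_10, v7_10, v8_10, v9_10, hself (B 10)]
    try norm_num
  have v2_10 : ν (B 2) (B 10) = 0 := by
    rw [hlt' 2 10 (B_lt_iff.mpr (by decide)),
      show FF 2 10 = ({5,8,10} : Finset (Fin 11)) from rfl]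
    rw [Finset.sum_insert (show (5:Fin 11) ∉ ({8,10} : Finset (Fin 11)) by decide)]
    rw [Finset.sum_insert (show (8:Fin 11) ∉ ({10} : Finset (Fin 11)) by decide)]
    rw [Finset.sum_singleton]
    rw [v5_10, v8_10, hself (B 10)]
    try norm_num
  have v3_10 : ν (B 3) (B 10) = 0 := by
    rw [hlt' 3 10 (B_lt_iff.mpr (by decide)),
      show FF 3 10 = ({5,8,10} : Finset (Fin 11)) from rfl]
    rw [Finset.sum_insert (show (5:Fin 11) ∉ ({8,10} : Finset (Fin 11)) by decide)]
    rw [Finset.sum_insert (show (8:Fin 11) ∉ ({10} : Finset (Fin 11)) by decide)]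
    rw [Finset.sum_singleton]
    rw [v5_10, v8_10, hself (B 10)]
    try norm_num
  have v0_10 : ν (B 0) (B 10) = 0 := by
    rw [hlt' 0 10 (B_lt_iff.mpr (by decide)),
      show FF 0 10 = ({1,2,3,4,5,6,7,8,9,10} : Finset (Fin 11)) from rfl]
    rw [Finset.sum_insert (show (1:Fin 11) ∉ ({2,3,4,5,6,7,8,9,10} : Finset (Fin 11)) by decide)]
    rw [Finset.sum_insert (show (2:Fin 11) ∉ ({3,4,5,6,7,8,9,10} : Finset (Fin 11)) by decide)]
    rw [Finset.sum_insert (show (3:Fin 11) ∉ ({4,5,6,7,8,9,10} : Finset (Fin 11)) by decide)]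
    rw [Finset.sum_insert (show (4:Fin 11) ∉ ({5,6,7,8,9,10} : Finset (Fin 11)) by decide)]
    rw [Finset.sum_insert (show (5:Fin 11) ∉ ({6,7,8,9,10} : Finset (Fin 11)) by decide)]
    rw [Finset.sum_insert (show (6:Fin 11) ∉ ({7,8,9,10} : Finset (Fin 11)) by decide)]
    rw [Finset.sum_insert (show (7:Fin 11) ∉ ({8,9,10} : Finset (Fin 11)) by decide)]
    rw [Finset.sum_insert (show (8:Fin 11) ∉ ({9,10} : Finset (Fin 11)) by decide)]
    rw [Finset.sum_insert (show (9:Fin 11) ∉ ({10} : Finset (Fin 11)) by decide)]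
    rw [Finset.sum_singleton]
    rw [v1_10, v2_10, v3_10, v4_10, v5_10, v6_10, v7_10, v8_10, v9_10, hself (B 10)]
    try norm_num
  have idx0 : (B 0).index = 16 := by
    have h := B_card_mul_index 0
    rw [show (c 0).card = 1 from rfl] at h
    omega
  have idx1 : (B 1).index = 8 := by
    have h := B_card_mul_index 1
    rw [show (c 1).card = 2 from rfl] at h
    omega
  have idx2 : (B 2).index = 8 := by
    have h := B_card_mul_index 2
    rw [show (c 2).card = 2 from rfl] at h
    omega
  have idx3 : (B 3).index = 8 := by
    have h := B_card_mul_index 3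
    rw [show (c 3).card = 2 from rfl] at h
    omega
  have idx4 : (B 4).index = 4 := by
    have h := B_card_mul_index 4
    rw [show (c 4).card = 4 from rfl] at h
    omega
  have idx5 : (B 5).index = 4 := by
    have h := B_card_mul_index 5
    rw [show (c 5).card = 4 from rfl] at h
    omega
  have idx6 : (B 6).index = 4 := by
    have h := B_card_mul_index 6
    rw [show (c 6).card = 4 from rfl] at h
    omega
  have idx7 : (B 7).index = 2 := by
    have h := B_card_mul_index 7
    rw [show (c 7).card = 8 from rfl] at h
    omega
  have idx8 : (B 8).index = 2 := by
    have h := B_card_mul_index 8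
    rw [show (c 8).card = 8 from rfl] at h
    omega
  have idx9 : (B 9).index = 2 := by
    have h := B_card_mul_index 9
    rw [show (c 9).card = 8 from rfl] at h
    omega
  have idx10 : (B 10).index = 1 := by
    have h := B_card_mul_index 10
    rw [show (c 10).card = 16 from rfl] at h
    omega
  rw [himg, Finset.sum_image (fun x _ y _ h => B_inj h), ← B0_eq_bot]
  rw [show (Finset.univ : Finset (Fin 11)) = ({0,1,2,3,4,5,6,7,8,9,10} : Finset (Fin 11)) from rfl]
  rw [Finset.sum_insert (show (0:Fin 11) ∉ ({1,2,3,4,5,6,7,8,9,10} : Finset (Fin 11)) by decide)]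
  rw [Finset.sum_insert (show (1:Fin 11) ∉ ({2,3,4,5,6,7,8,9,10} : Finset (Fin 11)) by decide)]
  rw [Finset.sum_insert (show (2:Fin 11) ∉ ({3,4,5,6,7,8,9,10} : Finset (Fin 11)) by decide)]
  rw [Finset.sum_insert (show (3:Fin 11) ∉ ({4,5,6,7,8,9,10} : Finset (Fin 11)) by decide)]
  rw [Finset.sum_insert (show (4:Fin 11) ∉ ({5,6,7,8,9,10} : Finset (Fin 11)) by decide)]
  rw [Finset.sum_insert (show (5:Fin 11) ∉ ({6,7,8,9,10} : Finset (Fin 11)) by decide)]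
  rw [Finset.sum_insert (show (6:Fin 11) ∉ ({7,8,9,10} : Finset (Fin 11)) by decide)]
  rw [Finset.sum_insert (show (7:Fin 11) ∉ ({8,9,10} : Finset (Fin 11)) by decide)]
  rw [Finset.sum_insert (show (8:Fin 11) ∉ ({9,10} : Finset (Fin 11)) by decide)]
  rw [Finset.sum_insert (show (9:Fin 11) ∉ ({10} : Finset (Fin 11)) by decide)]
  rw [Finset.sum_singleton]
  rw [hself (B 0), v0_1, v0_2, v0_3, v0_4, v0_5, v0_6, v0_7, v0_8, v0_9, v0_10, idx0, idx1, idx2, idx3, idx4, idx5, idx6, idx7, idx8, idx9, idx10]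
  norm_num

end MM


namespace RepPart
open CategoryTheory

noncomputable def zt : ℂ := Complex.exp (2 * Real.pi * Complex.I / 8)

lemma hzt : IsPrimitiveRoot zt 8 := Complex.isPrimitiveRoot_exp 8 (by norm_num)

lemma zt8 : zt ^ 8 = 1 := hzt.pow_eq_one

lemma zt0 : zt ≠ 0 := fun h => one_ne_zero (α := ℂ) (by rw [← zt8, h]; norm_num)

noncomputable def Xm : Matrix (Fin 2) (Fin 2) ℂ := Matrix.diagonal ![zt, zt^5]
noncomputable def Ym : Matrix (Fin 2) (Fin 2) ℂ := !![0,1;1,0]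

lemma powX (n : ℕ) : Xm ^ n = Matrix.diagonal ![zt^n, (zt^5)^n] := by
  have hv : (![zt, zt^5] : Fin 2 → ℂ)^n = ![zt^n, (zt^5)^n] := by
    funext i
    fin_cases i <;> simp [Pi.pow_apply]
  rw [Xm, Matrix.diagonal_pow, hv]

lemma hX8 : Xm ^ 8 = 1 := by
  rw [powX]
  have h1 : (zt^5)^8 = 1 := by
    have : (zt^5)^8 = (zt^8)^5 := by ring
    rw [this, zt8, one_pow]
  rw [zt8, h1]
  have : (![(1:ℂ), 1] : Fin 2 → ℂ) = 1 := by funext i; fin_cases i <;> rfl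
  rw [this]
  exact Matrix.diagonal_one

lemma hY2 : Ym ^ 2 = 1 := by
  rw [pow_two, Ym]
  ext i j
  fin_cases i <;> fin_cases j <;>
    simp [Matrix.mul_apply, Fin.sum_univ_two, Matrix.one_apply]

lemma z55 : (zt^5)^5 = zt := by
  have h : (zt^5)^5 = (zt^8)^3 * zt := by ring
  rw [h, zt8, one_pow, one_mul]

lemma hYX : Ym * Xm = Xm ^ 5 * Ym := by
  rw [powX, Xm, Ym]
  ext i j
  fin_cases i <;> fin_cases j <;>
    simp [Matrix.mul_diagonal, Matrix.diagonal_mul, z55]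

noncomputable def fm : MM →* Matrix (Fin 2) (Fin 2) ℂ := MM.lift Xm Ym hX8 hY2 hYX

lemma fm_apply (g : MM) : fm g = Xm ^ g.i.val * Ym ^ g.j.val := rfl

lemma Xpow_entry00 (n : ℕ) : (Xm ^ n) 0 0 = zt ^ n := by
  rw [powX]; simp [Matrix.diagonal_apply]

lemma Xpow_eq {m n : ℕ} (hm : m < 8) (hn : n < 8) (h : Xm ^ m = Xm ^ n) : m = n := by
  apply hzt.pow_inj hm hn
  rw [← Xpow_entry00, ← Xpow_entry00, h]

lemma mulYentry00 (m : ℕ) : (Xm ^ m * Ym) 0 0 = 0 := by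
  simp [powX, Ym, Matrix.mul_apply, Fin.sum_univ_two, Matrix.diagonal_apply]

lemma mulYentry01 (m : ℕ) : (Xm ^ m * Ym) 0 1 = zt ^ m := by
  simp [powX, Ym, Matrix.mul_apply, Fin.sum_univ_two, Matrix.diagonal_apply]

lemma fm_inj : Function.Injective fm := by
  rintro ⟨i, j⟩ ⟨k, l⟩ h
  rw [fm_apply, fm_apply] at h
  simp only at h
  have hval : i.val < 8 := ZMod.val_lt i
  have hval' : k.val < 8 := ZMod.val_lt k
  rcases MM.zmod2_cases j with rfl | rfl <;> rcases MM.zmod2_cases l with rfl | rfl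
  · rw [show (0 : ZMod 2).val = 0 from rfl, pow_zero, mul_one, mul_one] at h
    have h00 := congrFun (congrFun h 0) 0
    rw [Xpow_entry00, Xpow_entry00] at h00
    rw [MM.mk.injEq]
    exact ⟨ZMod.val_injective 8 (hzt.pow_inj hval hval' h00), rfl⟩
  · exfalso
    rw [show (0 : ZMod 2).val = 0 from rfl, show (1 : ZMod 2).val = 1 from rfl,
      pow_zero, pow_one, mul_one] at h
    have h00 := congrFun (congrFun h 0) 0
    rw [Xpow_entry00, mulYentry00] at h00
    exact pow_ne_zero _ zt0 h00
  · exfalso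
    rw [show (0 : ZMod 2).val = 0 from rfl, show (1 : ZMod 2).val = 1 from rfl,
      pow_zero, pow_one, mul_one] at h
    have h00 := congrFun (congrFun h 0) 0
    rw [Xpow_entry00, mulYentry00] at h00
    exact pow_ne_zero _ zt0 h00.symm
  · rw [show (1 : ZMod 2).val = 1 from rfl, pow_one] at h
    have h01 := congrFun (congrFun h 0) 1
    rw [mulYentry01, mulYentry01] at h01
    rw [MM.mk.injEq]
    exact ⟨ZMod.val_injective 8 (hzt.pow_inj hval hval' h01), rfl⟩

lemma vec_decomp (u : Fin 2 → ℂ) : u = u 0 • ![1,0] + u 1 • ![0,1] := by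
  funext i; fin_cases i <;> simp

lemma key (p : Submodule ℂ (Fin 2 → ℂ))
    (hpX : ∀ v ∈ p, Xm.mulVec v ∈ p) (hpY : ∀ v ∈ p, Ym.mulVec v ∈ p)
    (hbot : p ≠ ⊥) : p = ⊤ := by
  obtain ⟨v, hv, hv0⟩ := (Submodule.ne_bot_iff p).1 hbot
  have mulY : ∀ w : Fin 2 → ℂ, Ym.mulVec w = ![w 1, w 0] := by
    intro w
    funext i
    fin_cases i <;> simp [Ym, Matrix.mulVec, dotProduct, Fin.sum_univ_two]
  have step : ∀ w ∈ p, w 0 = 0 → w 1 ≠ 0 → p = ⊤ := by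
    intro w hw h0 h1
    have he1 : ![(0:ℂ),1] ∈ p := by
      have hmem := p.smul_mem (w 1)⁻¹ hw
      have : ((w 1)⁻¹ • w : Fin 2 → ℂ) = ![0,1] := by
        funext i
        fin_cases i <;> simp [h0, inv_mul_cancel₀ h1]
      rwa [this] at hmem
    have he0 : ![(1:ℂ),0] ∈ p := by
      have hmem := hpY _ he1
      rw [mulY] at hmem
      simpa using hmem
    rw [eq_top_iff]
    rintro u -
    rw [vec_decomp u]
    exact add_mem (p.smul_mem _ he0) (p.smul_mem _ he1)
  have step' : ∀ w ∈ p, w 1 = 0 → w 0 ≠ 0 → p = ⊤ := by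
    intro w hw h1 h0
    refine step (Ym.mulVec w) (hpY _ hw) ?_ ?_ <;> rw [mulY]
    · simpa using h1
    · simpa using h0
  by_cases h0 : v 0 = 0
  · have h1 : v 1 ≠ 0 := by
      intro h1
      apply hv0
      funext i
      fin_cases i
      · exact h0
      · exact h1
    exact step v hv h0 h1
  · by_cases h1 : v 1 = 0
    · exact step' v hv h1 h0
    · have mulX : Xm.mulVec v = ![zt * v 0, zt^5 * v 1] := by
        funext i
        fin_cases i <;> simp [Xm, Matrix.mulVec_diagonal]
      set w : Fin 2 → ℂ := Xm.mulVec v - zt • v with hw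
      have hwp : w ∈ p := sub_mem (hpX v hv) (p.smul_mem zt hv)
      have hw0 : w 0 = 0 := by
        rw [hw]
        simp [mulX]
      have hne : zt^5 - zt ≠ 0 := by
        intro hzz
        have h5 : zt^5 = zt := by linear_combination hzz
        have h4 : zt^4 = 1 := by
          have : zt^4 * zt = 1 * zt := by rw [← pow_succ, one_mul]; exact h5
          exact mul_right_cancel₀ zt0 this
        exact hzt.pow_ne_one_of_pos_of_lt (by norm_num) (by norm_num) h4
      have hw1 : w 1 ≠ 0 := by
        rw [hw]
        simp only [Pi.sub_apply, Pi.smul_apply, smul_eq_mul, mulX]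
        show zt^5 * v 1 - zt * v 1 ≠ 0
        have : zt^5 * v 1 - zt * v 1 = (zt^5 - zt) * v 1 := by ring
        rw [this]
        exact mul_ne_zero hne h1
      exact step w hwp hw0 hw1

theorem rep_exists {G : Type} [Group G] (e : MM ≃* G) :
    ∃ V : FDRep ℂ G, CategoryTheory.Simple V ∧ Function.Injective V.ρ := by
  classical
  set ρG : Representation ℂ G (Fin 2 → ℂ) :=
    (Matrix.toLinAlgEquiv'.toRingEquiv.toMulEquiv.toMonoidHom.comp
      (fm.comp e.symm.toMonoidHom)) with hρG
  set X : FDRep ℂ G := FDRep.of ρG with hX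
  have hXρ : ∀ g (v : Fin 2 → ℂ), X.ρ g v = (fm (e.symm g)).mulVec v := by
    intro g v
    show (Matrix.toLinAlgEquiv' (fm (e.symm g))) v = _
    rw [Matrix.toLinAlgEquiv'_apply]
  have hXa : ∀ v : Fin 2 → ℂ, X.ρ (e MM.α) v = Xm.mulVec v := by
    intro v
    rw [hXρ, MulEquiv.symm_apply_apply]
    rw [show fm MM.α = Xm from MM.lift_alpha Xm Ym hX8 hY2 hYX]
  have hXb : ∀ v : Fin 2 → ℂ, X.ρ (e MM.β) v = Ym.mulVec v := by
    intro v
    rw [hXρ, MulEquiv.symm_apply_apply]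
    rw [show fm MM.β = Ym from MM.lift_beta Xm Ym hX8 hY2 hYX]
  refine ⟨X, ⟨?_⟩, ?_⟩
  · -- Simple
    intro Y f hmono
    have hfc : ∀ g (y : Y), f.hom (Y.ρ g y) = X.ρ g (f.hom y) := by
      intro g y
      exact ConcreteCategory.congr_hom (f.comm g) y
    constructor
    · intro hiso h0
      have hid : 𝟙 X = 0 := by
        calc 𝟙 X = inv f ≫ f := (IsIso.inv_hom_id f).symm
          _ = inv f ≫ 0 := congrArg (fun g => inv f ≫ g) h0
          _ = 0 := Limits.comp_zero
      have happ := congrArg (fun φ : X ⟶ X => φ.hom ![(1:ℂ),0]) hid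
      simp only [Action.id_hom, Action.zero_hom] at happ
      have : (![(1:ℂ),0] : Fin 2 → ℂ) = 0 := happ
      exact one_ne_zero (congrFun this 0)
    · intro hne
      -- injectivity of f.hom
      have hK : ∀ g, ∀ x ∈ LinearMap.ker f.hom.hom.hom,
          Y.ρ g x ∈ LinearMap.ker f.hom.hom.hom := by
        intro g x hx
        rw [LinearMap.mem_ker] at hx ⊢
        have h' : f.hom.hom.hom (Y.ρ g x) = X.ρ g (f.hom.hom.hom x) := hfc g x
        rw [hx, map_zero] at h'
        exact h'
      set ρK : Representation ℂ G (LinearMap.ker f.hom.hom.hom) :=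
        { toFun := fun g => (Y.ρ g).restrict (hK g)
          map_one' := by
            apply LinearMap.ext
            intro x
            apply Subtype.ext
            simp [LinearMap.restrict_apply]
          map_mul' := fun g h => LinearMap.ext fun x => Subtype.ext (by
            show (Y.ρ (g*h)) x.val = (Y.ρ g) ((Y.ρ h) x.val)
            rw [map_mul]
            rfl) } with hρK
      set Z : FDRep ℂ G := FDRep.of ρK with hZ
      set ι : Z ⟶ Y :=
        { hom := InducedCategory.homMk (ModuleCat.ofHom (LinearMap.ker f.hom.hom.hom).subtype)
          comm := fun g => rfl } with hι
      have hcomp : ι ≫ f = 0 := by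
        apply Action.hom_ext
        apply InducedCategory.hom_ext
        apply ModuleCat.hom_ext
        apply LinearMap.ext
        intro x
        exact x.2
      have hι0 : ι = 0 := by
        exact (cancel_mono f).1 (show ι ≫ f = 0 ≫ f from by rw [hcomp, Limits.zero_comp])
      have hinj : Function.Injective f.hom.hom.hom := by
        rw [← LinearMap.ker_eq_bot, eq_bot_iff]
        intro x hx
        have happ : x = (0 : Z ⟶ Y).hom.hom.hom ⟨x, hx⟩ :=
          congrArg (fun φ : Z ⟶ Y => φ.hom.hom.hom ⟨x, hx⟩) hι0
        have hx0 : x = 0 := by simpa using happ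
        simp [hx0]
      -- surjectivity
      have hfhom_ne : f.hom.hom.hom ≠ 0 := by
        intro hh
        apply hne
        apply Action.hom_ext
        apply InducedCategory.hom_ext
        apply ModuleCat.hom_ext
        exact hh
      have hrange : LinearMap.range f.hom.hom.hom = ⊤ := by
        apply key
        · rintro v ⟨y, rfl⟩
          exact ⟨Y.ρ (e MM.α) y, (hfc _ y).trans (hXa (f.hom y))⟩
        · rintro v ⟨y, rfl⟩
          exact ⟨Y.ρ (e MM.β) y, (hfc _ y).trans (hXb (f.hom y))⟩
        · rw [Ne, LinearMap.range_eq_bot]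
          exact hfhom_ne
      have hsurj : Function.Surjective f.hom.hom.hom :=
        LinearMap.range_eq_top.1 hrange
      set eL : Y ≃ₗ[ℂ] X := LinearEquiv.ofBijective _ ⟨hinj, hsurj⟩ with heL
      set finv : X ⟶ Y :=
        { hom := InducedCategory.homMk (ModuleCat.ofHom (eL.symm.toLinearMap : X →ₗ[ℂ] Y))
          comm := by
            intro g
            apply InducedCategory.hom_ext
            apply ModuleCat.hom_ext
            apply LinearMap.ext
            intro x
            apply hinj
            have hfsymm : ∀ u, f.hom.hom.hom (eL.symm u) = u := fun u =>
              eL.apply_symm_apply u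
            show f.hom.hom.hom (eL.symm.toLinearMap ((X.ρ g) x)) =
              f.hom.hom.hom ((Y.ρ g) (eL.symm.toLinearMap x))
            calc f.hom.hom.hom (eL.symm ((X.ρ g) x))
                = (X.ρ g) x := hfsymm _
              _ = (X.ρ g) (f.hom.hom.hom (eL.symm x)) := by rw [hfsymm]
              _ = f.hom.hom.hom ((Y.ρ g) (eL.symm x)) := (hfc g _).symm } with hfinv
      refine ⟨⟨finv, ?_, ?_⟩⟩
      · apply Action.hom_ext
        apply InducedCategory.hom_ext
        apply ModuleCat.hom_ext
        apply LinearMap.ext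
        intro y
        show eL.symm (f.hom y) = y
        exact eL.symm_apply_apply y
      · apply Action.hom_ext
        apply InducedCategory.hom_ext
        apply ModuleCat.hom_ext
        apply LinearMap.ext
        intro x
        show f.hom (eL.symm x) = x
        exact eL.apply_symm_apply x
  · -- injectivity of X.ρ
    intro g g' hgh
    apply e.symm.injective
    apply fm_inj
    apply Matrix.toLinAlgEquiv'.injective
    exact hgh

end RepPart

open scoped Classical in
/-- For the modular maximal-cyclic group `M₄(2)` of order 16
(`⟨a,b | a⁸ = b² = 1, b a b⁻¹ = a⁵⟩`), the dual Euler totient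
`φ̂(G) = ∑_{H ≤ G} μ(1,H)·|G:H|` vanishes, yet `G` admits a faithful
irreducible complex representation. -/
theorem stmt15 {G : Type} [Group G] [Fintype G]
    (a b : G) (ha : orderOf a = 8) (hb : orderOf b = 2)
    (hrel : b * a * b⁻¹ = a ^ 5)
    (hgen : Subgroup.closure ({a, b} : Set G) = ⊤)
    (hcard : Nat.card G = 16)
    (μ : Subgroup G → Subgroup G → ℤ)
    (hμ_self : ∀ K : Subgroup G, μ K K = 1)
    (hμ_lt : ∀ K K' : Subgroup G, K < K' →
      μ K K' = -∑ L ∈ Finset.univ.filter (fun L : Subgroup G => K < L ∧ L ≤ K'), μ L K') :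
    (∑ H : Subgroup G, μ ⊥ H * (H.index : ℤ)) = 0 ∧
      ∃ V : FDRep ℂ G, CategoryTheory.Simple V ∧ Function.Injective V.ρ := by
  have ha8 : a ^ 8 = 1 := by rw [← ha]; exact pow_orderOf_eq_one a
  have hb2 : b ^ 2 = 1 := by rw [← hb]; exact pow_orderOf_eq_one b
  have hcomm : b * a = a ^ 5 * b := by rw [← hrel]; group
  set eHom : MM →* G := MM.lift a b ha8 hb2 hcomm with heHom
  have hsurj : Function.Surjective eHom := by
    rw [← MonoidHom.range_eq_top]
    rw [eq_top_iff, ← hgen]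
    rw [Subgroup.closure_le]
    rintro x (h | h)
    · exact ⟨MM.α, by rw [h]; exact MM.lift_alpha a b ha8 hb2 hcomm⟩
    · exact ⟨MM.β, by rw [h]; exact MM.lift_beta a b ha8 hb2 hcomm⟩
  have hbij : Function.Bijective eHom := by
    rw [Fintype.bijective_iff_surjective_and_card]
    refine ⟨hsurj, ?_⟩
    rw [show Fintype.card MM = 16 by decide, ← Nat.card_eq_fintype_card, hcard]
  -- transfer subgroups
  set Φ : Subgroup MM → Subgroup G := Subgroup.map eHom with hΦ
  have hΦinj : Function.Injective Φ := Subgroup.map_injective hbij.1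
  have hΦsurj : Function.Surjective Φ := by
    intro H
    refine ⟨Subgroup.comap eHom H, ?_⟩
    exact Subgroup.map_comap_eq_self_of_surjective hsurj H
  have hΦle : ∀ {S T : Subgroup MM}, Φ S ≤ Φ T ↔ S ≤ T :=
    fun {S T} => Subgroup.map_le_map_iff_of_injective hbij.1
  have hΦlt : ∀ {S T : Subgroup MM}, Φ S < Φ T ↔ S < T := by
    intro S T
    rw [lt_iff_le_not_ge, lt_iff_le_not_ge, hΦle, hΦle]
  have hΦbot : Φ ⊥ = ⊥ := by
    rw [hΦ]; exact Subgroup.map_bot eHom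
  have hΦidx : ∀ S : Subgroup MM, (Φ S).index = S.index := by
    intro S
    exact Subgroup.index_map_eq S hsurj
      (by rw [(MonoidHom.ker_eq_bot_iff eHom).2 hbij.1]; exact bot_le)
  have himgG : (Finset.univ : Finset (Subgroup G)) = Finset.univ.image Φ := by
    ext H
    simp only [Finset.mem_univ, true_iff, Finset.mem_image]
    obtain ⟨S, hS⟩ := hΦsurj H
    exact ⟨S, trivial, hS⟩
  constructor
  · -- Möbius sum
    set ν : Subgroup MM → Subgroup MM → ℤ := fun K L => μ (Φ K) (Φ L) with hν
    have hself : ∀ K : Subgroup MM, ν K K = 1 := fun K => hμ_self (Φ K)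
    have hlt : ∀ K K' : Subgroup MM, K < K' →
        ν K K' = -∑ L ∈ Finset.univ.filter (fun L : Subgroup MM => K < L ∧ L ≤ K'), ν L K' := by
      intro K K' hKK'
      show μ (Φ K) (Φ K') = _
      rw [hμ_lt (Φ K) (Φ K') (hΦlt.2 hKK')]
      congr 1
      rw [himgG, Finset.filter_image, Finset.sum_image (fun x _ y _ h => hΦinj h)]
      apply Finset.sum_congr
      · apply Finset.filter_congr
        intro S _
        rw [hΦlt, hΦle]
      · intro x _; rfl
    have := MM.mobius_sum ν hself hlt
    calc (∑ H : Subgroup G, μ ⊥ H * (H.index : ℤ))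
        = ∑ S : Subgroup MM, μ ⊥ (Φ S) * ((Φ S).index : ℤ) := by
          rw [himgG, Finset.sum_image (fun x _ y _ h => hΦinj h)]
      _ = ∑ S : Subgroup MM, ν ⊥ S * (S.index : ℤ) := by
          apply Finset.sum_congr rfl
          intro S _
          show _ = μ (Φ ⊥) (Φ S) * (S.index : ℤ)
          rw [hΦidx, hΦbot]
      _ = 0 := this
  · exact RepPart.rep_exists (MulEquiv.ofBijective eHom hbij)
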